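/- Let σ : {1,…,n} → ℝ take only the values +1 and -1, let Σ = diag(σ₁,…,σₙ), and let p be the number of indices i with σᵢ = +1. Let H be an n×n complex matrix such that Σ·H is Hermitian positive definite. Then H is diagonalizable with real eigenvalues: there exist an invertible matrix X ∈ ℂ^{n×n} and real numbers d₁,…,dₙ such that X⁻¹·H·X = diag(d₁,…,dₙ), and exactly p of the dᵢ are positive while the remaining n-p are negative. -/

import Mathlib

open Matrix ComplexOrder

private lemma diag_quad {n : ℕ} (a : Fin n → ℝ) (v : Fin n → ℂ) :
    star v ⬝ᵥ (Matrix.diagonal (fun i => (a i : ℂ)) *ᵥ v)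
      = ((∑ i, a i * Complex.normSq (v i) : ℝ) : ℂ) := by
  push_cast
  simp only [dotProduct, Matrix.mulVec_diagonal, Pi.star_apply,
    Complex.normSq_eq_conj_mul_self, RCLike.star_def]
  refine Finset.sum_congr rfl fun i _ => ?_
  ring

/-- Sylvester-type inequality: if `diag ν = Cᴴ diag μ C` then the number of positive
entries of `ν` is at most that of `μ`. -/
private lemma inertia_le {n : ℕ} (μ ν : Fin n → ℝ) (C : Matrix (Fin n) (Fin n) ℂ)
    (h : Matrix.diagonal (fun i => (ν i : ℂ))
          = Cᴴ * Matrix.diagonal (fun i => (μ i : ℂ)) * C) :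
    (Finset.univ.filter fun i => 0 < ν i).card ≤ (Finset.univ.filter fun i => 0 < μ i).card := by
  by_contra hlt
  push_neg at hlt
  -- extension-by-zero linear map
  let ext : ({i : Fin n // 0 < ν i} → ℂ) →ₗ[ℂ] (Fin n → ℂ) :=
    { toFun := fun c i => if h : 0 < ν i then c ⟨i, h⟩ else 0
      map_add' := by intro c₁ c₂; funext i; by_cases h : 0 < ν i <;> simp [h]
      map_smul' := by intro r c; funext i; by_cases h : 0 < ν i <;> simp [h] }
  let F : ({i : Fin n // 0 < ν i} → ℂ) →ₗ[ℂ] ({i : Fin n // 0 < μ i} → ℂ) :=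
    (LinearMap.funLeft ℂ ℂ (Subtype.val)).comp ((Matrix.mulVecLin C).comp ext)
  have hFnotinj : ¬ Function.Injective F := by
    intro hinj
    have := LinearMap.finrank_le_finrank_of_injective hinj
    rw [Module.finrank_fintype_fun_eq_card, Module.finrank_fintype_fun_eq_card,
      Fintype.card_subtype, Fintype.card_subtype] at this
    omega
  obtain ⟨a, b, hab, hne⟩ := Function.not_injective_iff.mp hFnotinj
  set c := a - b with hc
  have hc0 : c ≠ 0 := sub_ne_zero.mpr hne
  have hFc : F c = 0 := by rw [hc, map_sub, hab, sub_self]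
  set x : Fin n → ℂ := ext c with hx
  set y : Fin n → ℂ := C *ᵥ x with hy
  have hxi : ∀ i (hi : 0 < ν i), x i = c ⟨i, hi⟩ := by
    intro i hi; simp only [hx, ext, LinearMap.coe_mk, AddHom.coe_mk, dif_pos hi]
  have hxi0 : ∀ i, ¬ 0 < ν i → x i = 0 := by
    intro i hi; simp only [hx, ext, LinearMap.coe_mk, AddHom.coe_mk, dif_neg hi]
  have hyi0 : ∀ i, 0 < μ i → y i = 0 := by
    intro i hi
    have := congrFun hFc ⟨i, hi⟩
    simpa [F, hy, hx, Matrix.mulVecLin] using this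
  -- the two quadratic form values agree
  have key : (∑ i, ν i * Complex.normSq (x i)) = ∑ i, μ i * Complex.normSq (y i) := by
    have e1 : star x ⬝ᵥ (Matrix.diagonal (fun i => (ν i : ℂ)) *ᵥ x)
        = star y ⬝ᵥ (Matrix.diagonal (fun i => (μ i : ℂ)) *ᵥ y) := by
      rw [h, ← Matrix.mulVec_mulVec, ← Matrix.mulVec_mulVec,
        Matrix.dotProduct_mulVec, ← Matrix.star_mulVec, ← hy]
    rw [diag_quad, diag_quad] at e1
    exact_mod_cast e1
  have hpos : 0 < ∑ i, ν i * Complex.normSq (x i) := by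
    obtain ⟨t, ht⟩ := Function.ne_iff.mp hc0
    refine Finset.sum_pos' (fun i _ => ?_) ⟨t.1, Finset.mem_univ _, ?_⟩
    · by_cases hi : 0 < ν i
      · exact mul_nonneg hi.le (Complex.normSq_nonneg _)
      · rw [hxi0 i hi]; simp
    · have : x t.1 ≠ 0 := by rw [hxi t.1 t.2]; simpa using ht
      exact mul_pos t.2 (by simpa [Complex.normSq_pos] using this)
  have hnonpos : (∑ i, μ i * Complex.normSq (y i)) ≤ 0 := by
    refine Finset.sum_nonpos fun i _ => ?_
    by_cases hi : 0 < μ i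
    · rw [hyi0 i hi]; simp
    · exact mul_nonpos_of_nonpos_of_nonneg (not_lt.mp hi) (Complex.normSq_nonneg _)
  rw [key] at hpos
  linarith

/-- If `Σ = diag(σ₁,…,σₙ)` is a signature matrix with `p` positive entries and
`Σ H` is Hermitian positive definite, then `H` is diagonalizable with real
eigenvalues, of which exactly `p` are positive and `n - p` are negative. -/
theorem signature_posdef_diagonalizable
    (n : ℕ) (σ : Fin n → ℝ) (hσ : ∀ i, σ i = 1 ∨ σ i = -1)
    (p : ℕ) (hp : p = (Finset.univ.filter fun i => σ i = 1).card)
    (H : Matrix (Fin n) (Fin n) ℂ)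
    (hpd : (Matrix.diagonal (fun i => (σ i : ℂ)) * H).PosDef) :
    ∃ X : Matrix (Fin n) (Fin n) ℂ, IsUnit X ∧
      ∃ d : Fin n → ℝ,
        X⁻¹ * H * X = Matrix.diagonal (fun i => (d i : ℂ)) ∧
        (Finset.univ.filter fun i => 0 < d i).card = p ∧
        (Finset.univ.filter fun i => d i < 0).card = n - p := by
  classical
  set S : Matrix (Fin n) (Fin n) ℂ := Matrix.diagonal (fun i => (σ i : ℂ)) with hS
  set A : Matrix (Fin n) (Fin n) ℂ := S * H with hA
  have hσsq : (fun i => (σ i : ℂ) * (σ i : ℂ)) = fun _ => (1 : ℂ) := by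
    funext i; rcases hσ i with h | h <;> norm_num [h]
  have hSS : S * S = 1 := by
    rw [hS, Matrix.diagonal_mul_diagonal, hσsq, Matrix.diagonal_one]
  have hH : H = S * A := by rw [hA, ← Matrix.mul_assoc, hSS, Matrix.one_mul]
  have hstarσ : (star fun i => (σ i : ℂ)) = fun i => (σ i : ℂ) := by
    funext i; simp [Complex.conj_ofReal]
  have hSherm : S.IsHermitian := by
    rw [Matrix.IsHermitian, hS, Matrix.diagonal_conjTranspose, hstarσ]
  -- square root of A
  open scoped MatrixOrder in
  set B : Matrix (Fin n) (Fin n) ℂ := CFC.sqrt A with hB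
  open scoped MatrixOrder in
  have hBherm : B.IsHermitian := (CFC.sqrt_nonneg A).posSemidef.1
  open scoped MatrixOrder in
  have hBB : B * B = A := CFC.sqrt_mul_sqrt_self A hpd.posSemidef.nonneg
  have hBunit : IsUnit B.det := by
    have hAdet : IsUnit A.det := (Matrix.isUnit_iff_isUnit_det A).mp hpd.isUnit
    have h2 : B.det * B.det = A.det := by rw [← Matrix.det_mul, hBB]
    exact isUnit_of_mul_isUnit_left (h2 ▸ hAdet)
  -- the Hermitian matrix B Σ B
  set M : Matrix (Fin n) (Fin n) ℂ := B * S * B with hM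
  have hMherm : M.IsHermitian := by
    rw [Matrix.IsHermitian, hM, Matrix.conjTranspose_mul, Matrix.conjTranspose_mul,
      hBherm.eq, hSherm.eq, Matrix.mul_assoc]
  set U : Matrix (Fin n) (Fin n) ℂ := (hMherm.eigenvectorUnitary : Matrix (Fin n) (Fin n) ℂ)
    with hU
  have hUU : star U * U = 1 := Matrix.mem_unitaryGroup_iff'.mp hMherm.eigenvectorUnitary.2
  have hUU' : U * star U = 1 := Matrix.mem_unitaryGroup_iff.mp hMherm.eigenvectorUnitary.2
  have hUinv : U⁻¹ = star U := Matrix.inv_eq_left_inv hUU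
  have hUdet : IsUnit U.det := by
    have := congrArg Matrix.det hUU'
    rw [Matrix.det_mul, Matrix.det_one] at this
    exact IsUnit.of_mul_eq_one _ this
  set d : Fin n → ℝ := hMherm.eigenvalues with hd
  have hspec : M = U * Matrix.diagonal (fun i => (d i : ℂ)) * star U :=
    hMherm.spectral_theorem
  have hdiag : star U * M * U = Matrix.diagonal (fun i => (d i : ℂ)) := by
    conv_lhs => rw [hspec]
    rw [show star U * (U * Matrix.diagonal (fun i => (d i : ℂ)) * star U) * U
        = star U * U * (Matrix.diagonal (fun i => (d i : ℂ)) * (star U * U)) by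
      simp only [Matrix.mul_assoc], hUU, Matrix.mul_one, Matrix.one_mul]
  have hXunit : IsUnit (B⁻¹ * U) :=
    (Matrix.isUnit_nonsing_inv_iff.mpr ((Matrix.isUnit_iff_isUnit_det B).mpr hBunit)).mul
      ((Matrix.isUnit_iff_isUnit_det U).mpr hUdet)
  have heq : (B⁻¹ * U)⁻¹ * H * (B⁻¹ * U) = Matrix.diagonal (fun i => (d i : ℂ)) := by
    have hXinv : (B⁻¹ * U)⁻¹ = star U * B := by
      rw [Matrix.mul_inv_rev, Matrix.nonsing_inv_nonsing_inv _ hBunit, hUinv]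
    rw [hXinv]
    have hBHB : B * H * B⁻¹ = M := by
      rw [hH, hM, ← hBB]
      rw [show B * (S * (B * B)) * B⁻¹ = B * S * (B * (B * B⁻¹)) by
        simp only [Matrix.mul_assoc]]
      rw [Matrix.mul_nonsing_inv _ hBunit, Matrix.mul_one]
    calc star U * B * H * (B⁻¹ * U)
        = star U * (B * H * B⁻¹) * U := by simp only [Matrix.mul_assoc]
      _ = star U * M * U := by rw [hBHB]
      _ = Matrix.diagonal (fun i => (d i : ℂ)) := hdiag
  -- counting
  have hV : IsUnit (B * U).det := by rw [Matrix.det_mul]; exact hBunit.mul hUdet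
  have h1 : Matrix.diagonal (fun i => (d i : ℂ)) = (B * U)ᴴ * S * (B * U) := by
    rw [← hdiag, Matrix.conjTranspose_mul, hBherm.eq, hM, Matrix.star_eq_conjTranspose]
    simp only [Matrix.mul_assoc]
  have h2 : S = ((B * U)⁻¹)ᴴ * Matrix.diagonal (fun i => (d i : ℂ)) * (B * U)⁻¹ := by
    rw [h1, Matrix.conjTranspose_nonsing_inv]
    rw [show (B * U)ᴴ⁻¹ * ((B * U)ᴴ * S * (B * U)) * (B * U)⁻¹
        = (B * U)ᴴ⁻¹ * (B * U)ᴴ * S * ((B * U) * (B * U)⁻¹) by simp only [Matrix.mul_assoc],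
      Matrix.mul_nonsing_inv _ hV,
      Matrix.nonsing_inv_mul _ (by rwa [Matrix.det_conjTranspose, isUnit_iff_ne_zero,
        ne_eq, star_eq_zero, ← ne_eq, ← isUnit_iff_ne_zero]),
      Matrix.one_mul, Matrix.mul_one]
  have hnegdiag : ∀ (f : Fin n → ℝ),
      Matrix.diagonal (fun i => ((-(f i) : ℝ) : ℂ)) = - Matrix.diagonal (fun i => (f i : ℂ)) := by
    intro f
    ext i j
    rcases eq_or_ne i j with rfl | hij
    · simp
    · simp [Matrix.diagonal_apply_ne _ hij]
  have h1' : Matrix.diagonal (fun i => ((-(d i) : ℝ) : ℂ))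
      = (B * U)ᴴ * Matrix.diagonal (fun i => ((-(σ i) : ℝ) : ℂ)) * (B * U) := by
    rw [hnegdiag, hnegdiag, h1, ← hS, mul_neg, neg_mul]
  have h2' : Matrix.diagonal (fun i => ((-(σ i) : ℝ) : ℂ))
      = ((B * U)⁻¹)ᴴ * Matrix.diagonal (fun i => ((-(d i) : ℝ) : ℂ)) * (B * U)⁻¹ := by
    rw [hnegdiag, hnegdiag, ← hS, h2, mul_neg, neg_mul]
  have hle1 := inertia_le σ d (B * U) (hS ▸ h1)
  have hge1 := inertia_le d σ (B * U)⁻¹ (hS ▸ h2)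
  have hle2 : (Finset.univ.filter fun i => 0 < -(d i)).card
      ≤ (Finset.univ.filter fun i => 0 < -(σ i)).card :=
    inertia_le (fun j => -(σ j)) (fun j => -(d j)) (B * U) h1'
  have hge2 : (Finset.univ.filter fun i => 0 < -(σ i)).card
      ≤ (Finset.univ.filter fun i => 0 < -(d i)).card :=
    inertia_le (fun j => -(d j)) (fun j => -(σ j)) (B * U)⁻¹ h2'
  have hpσ : (Finset.univ.filter fun i => 0 < σ i).card = p := by
    rw [hp]
    congr 1
    apply Finset.filter_congr
    intro i _
    rcases hσ i with h | h <;> norm_num [h]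
  have hnσ : (Finset.univ.filter fun i => 0 < -(σ i)).card = n - p := by
    have hsplit := Finset.card_filter_add_card_filter_not
      (s := (Finset.univ : Finset (Fin n))) (p := fun i => 0 < σ i)
    have he : Finset.univ.filter (fun i => ¬ 0 < σ i)
        = Finset.univ.filter (fun i => 0 < -(σ i)) := by
      apply Finset.filter_congr
      intro i _
      rcases hσ i with h | h <;> norm_num [h]
    rw [he, Finset.card_univ, Fintype.card_fin, hpσ] at hsplit
    omega
  have hcpos : (Finset.univ.filter fun i => 0 < d i).card = p := by omega
  have hcneg : (Finset.univ.filter fun i => d i < 0).card = n - p := by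
    have he : Finset.univ.filter (fun i => d i < 0)
        = Finset.univ.filter (fun i => 0 < -(d i)) := by
      apply Finset.filter_congr
      intro i _
      constructor <;> intro <;> linarith
    rw [he]
    omega
  exact ⟨B⁻¹ * U, hXunit, d, heq, hcpos, hcneg⟩
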